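/- For every integer m = 4m₀ with m₀ ≥ 1, the labeling ℓ of W(m) defined by {ℓ(x_i), ℓ(y_i)} = {2i-2m+1, 2m-2i-1} for all i ∈ {0,...,m-1} (with ℓ(x_i) = 2i-2m+1) is a distance magic labeling of W(m). -/

import Mathlib

open Finset

/-- The label set `I_n = {1-n, 3-n, ..., n-1}`. -/
def ISet (n : ℕ) : Finset ℤ := (Finset.range n).image (fun i : ℕ => 2 * (i : ℤ) + 1 - n)

open scoped Classical in
/-- Sum of the labels over the neighborhood of `w`. -/
noncomputable def nbrSum {V : Type*} [Fintype V] (G : SimpleGraph V) (ℓ : V → ℤ) (w : V) : ℤ :=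
  ∑ x ∈ Finset.univ.filter (fun x => G.Adj w x), ℓ x

open scoped Classical in
/-- The degree of a vertex. -/
noncomputable def gdeg {V : Type*} [Fintype V] (G : SimpleGraph V) (w : V) : ℕ :=
  (Finset.univ.filter (fun x => G.Adj w x)).card

/-- A distance magic labeling: a bijection onto `I_n` with all neighborhood sums `0`. -/
def IsDML {V : Type*} [Fintype V] (G : SimpleGraph V) (ℓ : V → ℤ) : Prop :=
  Function.Injective ℓ ∧ (∀ x, ℓ x ∈ ISet (Fintype.card V)) ∧
    (∀ i ∈ ISet (Fintype.card V), ∃ x, ℓ x = i) ∧ ∀ w, nbrSum G ℓ w = 0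

/-- The wreath graph `W(m)`: vertices `(i, b)` with `b = false` for `x_i` and `b = true` for
`y_i`; each of `x_i, y_i` is adjacent to each of `x_{i±1}, y_{i±1}` (indices mod `m`). -/
def wreath (m : ℕ) : SimpleGraph (ZMod m × Bool) where
  Adj p q := p ≠ q ∧ (p.1 = q.1 + 1 ∨ q.1 = p.1 + 1)
  symm := ⟨fun p q h => ⟨h.1.symm, h.2.symm⟩⟩
  loopless := ⟨fun p h => h.1 rfl⟩

/-- For `m = 4m₀` with `m₀ ≥ 1`, the labeling `ℓ(x_i) = 2i - 2m + 1`, `ℓ(y_i) = 2m - 2i - 1`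
is a distance magic labeling of the wreath graph `W(m)`. -/
theorem wreath_four_dvd_labeling (m m₀ : ℕ) [NeZero m] (hm₀ : 1 ≤ m₀) (hm : m = 4 * m₀)
    (ℓ : ZMod m × Bool → ℤ)
    (hl : ∀ p : ZMod m × Bool,
      ℓ p = if p.2 then 2 * (m : ℤ) - 2 * (p.1.val : ℤ) - 1
            else 2 * (p.1.val : ℤ) - 2 * (m : ℤ) + 1) :
    IsDML (wreath m) ℓ := by
  classical
  have hm4 : 4 ≤ m := by omega
  have hF : ∀ i : ZMod m, ℓ (i, false) = 2 * (i.val : ℤ) - 2 * m + 1 := by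
    intro i; simpa using hl (i, false)
  have hT : ∀ i : ZMod m, ℓ (i, true) = 2 * m - 2 * (i.val : ℤ) - 1 := by
    intro i; simpa using hl (i, true)
  have hvl : ∀ i : ZMod m, i.val < m := fun i => ZMod.val_lt i
  have hcard : Fintype.card (ZMod m × Bool) = 2 * m := by
    rw [Fintype.card_prod, ZMod.card, Fintype.card_bool]; ring
  have h2 : (2 : ZMod m) ≠ 0 := by
    intro h
    have : ((2 : ℕ) : ZMod m) = 0 := by exact_mod_cast h
    rw [ZMod.natCast_eq_zero_iff] at this
    have := Nat.le_of_dvd (by norm_num) this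
    omega
  have h1 : (1 : ZMod m) ≠ 0 := by
    intro h
    have : ((1 : ℕ) : ZMod m) = 0 := by exact_mod_cast h
    rw [ZMod.natCast_eq_zero_iff] at this
    have := Nat.le_of_dvd (by norm_num) this
    omega
  refine ⟨?_, ?_, ?_, ?_⟩
  · rintro ⟨i, bi⟩ ⟨j, bj⟩ h
    have hi := hvl i; have hj := hvl j
    cases bi <;> cases bj <;> simp only [hF, hT] at h
    · have : i = j := ZMod.val_injective m (by omega)
      rw [this]
    · omega
    · omega
    · have : i = j := ZMod.val_injective m (by omega)
      rw [this]
  · rintro ⟨i, b⟩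
    rw [hcard]
    have hi := hvl i
    simp only [ISet, Finset.mem_image, Finset.mem_range]
    cases b
    · exact ⟨i.val, by omega, by rw [hF]; push_cast; ring⟩
    · exact ⟨2 * m - 1 - i.val, by omega, by rw [hT]; push_cast [Nat.sub_sub]; omega⟩
  · intro v hv
    rw [hcard] at hv
    simp only [ISet, Finset.mem_image, Finset.mem_range] at hv
    obtain ⟨k, hk, rfl⟩ := hv
    by_cases hkm : k < m
    · refine ⟨((k : ZMod m), false), ?_⟩
      rw [hF, ZMod.val_natCast_of_lt hkm]; push_cast; ring
    · refine ⟨(((2 * m - 1 - k : ℕ) : ZMod m), true), ?_⟩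
      rw [hT, ZMod.val_natCast_of_lt (by omega)]
      push_cast
      omega
  · intro w
    have hne1 : w.1 + 1 ≠ w.1 := fun h => h1 (by linear_combination h)
    have hne1' : w.1 - 1 ≠ w.1 := fun h => h1 (by linear_combination -h)
    have hne2 : w.1 + 1 ≠ w.1 - 1 := fun h => h2 (by linear_combination h)
    have hfil : nbrSum (wreath m) ℓ w =
        ∑ q ∈ ({(w.1 + 1, false), (w.1 + 1, true), (w.1 - 1, false), (w.1 - 1, true)} :
          Finset (ZMod m × Bool)), ℓ q := by
      rw [nbrSum]
      congr 1
      ext ⟨j, b⟩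
      simp only [mem_filter, mem_univ, true_and, mem_insert, mem_singleton, Prod.mk.injEq]
      simp only [wreath]
      constructor
      · rintro ⟨hne, h | h⟩
        · have hj : j = w.1 - 1 := by linear_combination -h
          cases b
          · exact Or.inr (Or.inr (Or.inl ⟨hj, rfl⟩))
          · exact Or.inr (Or.inr (Or.inr ⟨hj, rfl⟩))
        · cases b
          · exact Or.inl ⟨h, rfl⟩
          · exact Or.inr (Or.inl ⟨h, rfl⟩)
      · rintro (⟨hj, hb⟩ | ⟨hj, hb⟩ | ⟨hj, hb⟩ | ⟨hj, hb⟩) <;> subst hj <;> subst hb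
        · exact ⟨fun h => hne1 (congrArg Prod.fst h).symm, Or.inr rfl⟩
        · exact ⟨fun h => hne1 (congrArg Prod.fst h).symm, Or.inr rfl⟩
        · exact ⟨fun h => hne1' (congrArg Prod.fst h).symm, Or.inl (by ring)⟩
        · exact ⟨fun h => hne1' (congrArg Prod.fst h).symm, Or.inl (by ring)⟩
    rw [hfil]
    rw [Finset.sum_insert (by simp [Prod.ext_iff, hne2]),
        Finset.sum_insert (by simp [Prod.ext_iff, hne2]),
        Finset.sum_insert (by simp [Prod.ext_iff]),
        Finset.sum_singleton]
    rw [hF, hT, hF, hT]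
    ring
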